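/- arXiv:1104.3447 — 5 statements merged into one kernel-verified Lean document; each statement's English description precedes it below -/
import Mathlib

section
/- For every integer n ≥ 1 and every real t > 0, a_n(t) ≤ (π t)^{n/2} · exp(−(n/2)·(log(n/2) − 1)). -/
open MeasureTheory

/-- `a_n(t) = ∫_{[0,t]^n} 1{s₁+⋯+sₙ ≤ t} ∏ᵢ sᵢ^{-1/2} ds` (Lebesgue/Bochner integral with
respect to the volume on `Fin n → ℝ`). -/
noncomputable def aFun (n : ℕ) (t : ℝ) : ℝ :=
  ∫ s in Set.univ.pi (fun _ : Fin n => Set.Icc (0 : ℝ) t),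
    (if (∑ i, s i) ≤ t then ∏ i, (s i) ^ (-(1 : ℝ) / 2) else 0)

/-- **(10.11):** for every `n ≥ 1` and `t > 0`,
`a_n(t) ≤ (π t)^{n/2} · exp(−(n/2)(log(n/2) − 1))`. -/
theorem aFun_le (n : ℕ) (hn : 1 ≤ n) (t : ℝ) (ht : 0 < t) :
    aFun n t ≤ (Real.pi * t) ^ ((n : ℝ) / 2) *
      Real.exp (-((n : ℝ) / 2) * (Real.log ((n : ℝ) / 2) - 1)) := by
  have hn0 : (0:ℝ) < n := by exact_mod_cast hn
  set l : ℝ := n / (2 * t) with hl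
  have hl0 : 0 < l := by positivity
  set h : ℝ → ℝ := fun x => Real.exp (1/2 - l * x) * x ^ (-(1:ℝ)/2) with hh
  set g : ℝ → ℝ := (Set.Ioi (0:ℝ)).indicator h with hgdef
  have hg_nonneg : ∀ x, 0 ≤ g x := by
    intro x
    refine Set.indicator_nonneg (fun y hy => ?_) x
    have : (0:ℝ) < y := hy
    positivity
  have hhe : h = fun x => Real.exp (1/2) * (x ^ ((1:ℝ)/2 - 1) * Real.exp (-(l * x))) := by
    funext x
    simp only [hh]
    have : Real.exp (1/2 - l*x) = Real.exp (1/2) * Real.exp (-(l*x)) := by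
      rw [← Real.exp_add]; ring_nf
    rw [this]
    norm_num
    ring
  -- integrability of h on Ioi 0
  have hOn : IntegrableOn h (Set.Ioi (0:ℝ)) := by
    have h0 : IntegrableOn (fun x : ℝ => x ^ (-(1:ℝ)/2) * Real.exp (-l * x ^ (1:ℝ)))
        (Set.Ioi (0:ℝ)) :=
      integrableOn_rpow_mul_exp_neg_mul_rpow (by norm_num) one_pos hl0
    simp_rw [Real.rpow_one, neg_mul] at h0
    rw [hhe]
    have h1 := h0.const_mul (Real.exp (1/2))
    norm_num at h1 ⊢
    exact h1
  have hg_int : Integrable g := (integrable_indicator_iff measurableSet_Ioi).2 hOn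
  have hg_val : ∫ x, g x = Real.exp (1/2) * ((1/l) ^ ((1:ℝ)/2) * Real.sqrt Real.pi) := by
    rw [hgdef, integral_indicator measurableSet_Ioi, hhe, integral_const_mul,
      Real.integral_rpow_mul_exp_neg_mul_Ioi (by norm_num) hl0, Real.Gamma_one_half_eq]
  -- the product bound
  set S := Set.univ.pi (fun _ : Fin n => Set.Icc (0:ℝ) t) with hSdef
  have hSmeas : MeasurableSet S := MeasurableSet.univ_pi (fun _ => measurableSet_Icc)
  set F : (Fin n → ℝ) → ℝ :=
    fun s => if (∑ i, s i) ≤ t then ∏ i, (s i) ^ (-(1:ℝ)/2) else 0 with hFdef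
  set G : (Fin n → ℝ) → ℝ := fun s => ∏ i, g (s i) with hGdef
  have hG_nonneg : ∀ s, 0 ≤ G s := fun s => Finset.prod_nonneg (fun i _ => hg_nonneg _)
  have hG_int : Integrable G := Integrable.fintype_prod (fun _ => hg_int)
  have hf_nonneg : ∀ s, s ∈ S → 0 ≤ F s := by
    intro s hs
    rw [hFdef]
    dsimp only
    split
    · exact Finset.prod_nonneg fun i _ =>
        Real.rpow_nonneg ((hs i (Set.mem_univ i)).1) _
    · exact le_refl 0
  have hfG : ∀ s, s ∈ S → F s ≤ G s := by
    intro s hs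
    rw [hFdef]
    dsimp only
    split
    · rename_i hsum
      by_cases hz : ∀ i, 0 < s i
      · have hgi : ∀ i, g (s i) = Real.exp (1/2 - l * s i) * (s i) ^ (-(1:ℝ)/2) :=
          fun i => Set.indicator_of_mem (hz i) h
        have hGs : G s = Real.exp (∑ i, ((1:ℝ)/2 - l * s i)) * ∏ i, (s i) ^ (-(1:ℝ)/2) := by
          rw [hGdef]
          dsimp only
          simp_rw [hgi]
          rw [Finset.prod_mul_distrib, Real.exp_sum]
        rw [hGs]
        have hP : 0 ≤ ∏ i, (s i) ^ (-(1:ℝ)/2) :=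
          Finset.prod_nonneg fun i _ => Real.rpow_nonneg (hz i).le _
        have hc : 0 ≤ ∑ i, ((1:ℝ)/2 - l * s i) := by
          rw [Finset.sum_sub_distrib, Finset.sum_const, ← Finset.mul_sum]
          have h1 : l * (∑ i, s i) ≤ l * t := mul_le_mul_of_nonneg_left hsum hl0.le
          have h2 : l * t = (n:ℝ)/2 := by
            rw [hl]; field_simp
          simp only [Finset.card_univ, Fintype.card_fin, nsmul_eq_mul, mul_one_div]
          linarith
        exact le_mul_of_one_le_left hP (Real.one_le_exp hc)
      · push_neg at hz
        obtain ⟨i, hi⟩ := hz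
        have hi0 : s i = 0 := le_antisymm hi ((hs i (Set.mem_univ i)).1)
        have : ∏ i, (s i) ^ (-(1:ℝ)/2) = 0 := by
          refine Finset.prod_eq_zero (Finset.mem_univ i) ?_
          rw [hi0, Real.zero_rpow (by norm_num)]
        rw [this]
        exact hG_nonneg s
    · exact hG_nonneg s
  have step1 : aFun n t ≤ ∫ s in S, G s := by
    rw [aFun]
    refine integral_mono_of_nonneg ?_ hG_int.integrableOn ?_
    · exact (ae_restrict_iff' hSmeas).2 (Filter.Eventually.of_forall hf_nonneg)
    · exact (ae_restrict_iff' hSmeas).2 (Filter.Eventually.of_forall hfG)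
  have step2 : ∫ s in S, G s ≤ ∫ s, G s :=
    setIntegral_le_integral hG_int (Filter.Eventually.of_forall hG_nonneg)
  have step3 : ∫ s, G s = (∫ x, g x) ^ n := by
    have := MeasureTheory.integral_fintype_prod_eq_pow (𝕜 := ℝ) (ι := Fin n) g (μ := volume)
    rwa [Fintype.card_fin] at this
  -- final arithmetic
  have h1l : 1/l = 2*t/n := by
    rw [hl]
    field_simp
  have hJ : (∫ x, g x) ^ n = (Real.pi * t) ^ ((n : ℝ) / 2) *
      Real.exp (-((n : ℝ) / 2) * (Real.log ((n : ℝ) / 2) - 1)) := by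
    rw [hg_val, h1l]
    have e1 : (2*t/n : ℝ) ^ ((1:ℝ)/2) = Real.exp (Real.log (2*t/n) * (1/2)) :=
      Real.rpow_def_of_pos (by positivity) _
    have e2 : Real.sqrt Real.pi = Real.exp (Real.log Real.pi * (1/2)) := by
      rw [Real.sqrt_eq_rpow]
      exact Real.rpow_def_of_pos Real.pi_pos _
    have e3 : (Real.pi * t) ^ ((n:ℝ)/2) = Real.exp (Real.log (Real.pi * t) * ((n:ℝ)/2)) :=
      Real.rpow_def_of_pos (by positivity) _
    rw [e1, e2, e3, ← Real.exp_add, ← Real.exp_add, ← Real.exp_nat_mul, ← Real.exp_add]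
    congr 1
    have l1 : Real.log (Real.pi * t) = Real.log Real.pi + Real.log t :=
      Real.log_mul (ne_of_gt Real.pi_pos) (ne_of_gt ht)
    have l2 : Real.log (2*t/n) = Real.log 2 + Real.log t - Real.log n := by
      rw [Real.log_div (by positivity) (ne_of_gt hn0), Real.log_mul (by norm_num) (ne_of_gt ht)]
    have l3 : Real.log ((n:ℝ)/2) = Real.log n - Real.log 2 :=
      Real.log_div (ne_of_gt hn0) (by norm_num)
    rw [l1, l2, l3]
    ring
  calc aFun n t ≤ ∫ s in S, G s := step1
    _ ≤ ∫ s, G s := step2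
    _ = (∫ x, g x) ^ n := step3
    _ = _ := hJ
end

section
/- There is a constant c < ∞ such that for every real t > 0, Σ_{n=1}^{∞} a_n(t) ≤ c · e^{π t}. -/
open MeasureTheory

noncomputable def gg (s : ℝ) : ENNReal := ENNReal.ofReal (s ^ (-(1 : ℝ) / 2))

open Classical in
noncomputable def FF (n : ℕ) (t : ℝ) : ENNReal :=
  ∫⁻ s : Fin n → ℝ, if (∀ i, 0 ≤ s i) ∧ (∑ i, s i) ≤ t then ∏ i, gg (s i) else 0

noncomputable def CC (n : ℕ) : ℝ := Real.pi ^ ((n : ℝ) / 2) / Real.Gamma ((n : ℝ) / 2 + 1)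

lemma rpow_neg_half_nonneg (x : ℝ) : 0 ≤ x ^ (-(1 : ℝ) / 2) := by
  rcases le_or_gt 0 x with hx | hx
  · exact Real.rpow_nonneg hx _
  · rw [Real.rpow_def_of_neg hx]
    have : Real.cos (-(1 : ℝ) / 2 * Real.pi) = 0 := by
      rw [show (-(1 : ℝ) / 2 * Real.pi) = -(Real.pi / 2) by ring, Real.cos_neg,
        Real.cos_pi_div_two]
    rw [this, mul_zero]

lemma gg_measurable : Measurable gg :=
  (measurable_id.pow measurable_const).ennreal_ofReal

lemma integrand_measurable (n : ℕ) (t : ℝ) :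
    Measurable (fun s : Fin n → ℝ =>
      if (∀ i, 0 ≤ s i) ∧ (∑ i, s i) ≤ t then ∏ i, gg (s i) else 0) := by
  classical
  have h1 : MeasurableSet {s : Fin n → ℝ | (∀ i, 0 ≤ s i) ∧ (∑ i, s i) ≤ t} := by
    have e : {s : Fin n → ℝ | (∀ i, 0 ≤ s i) ∧ (∑ i, s i) ≤ t}
        = (Set.univ.pi fun _ => Set.Ici (0 : ℝ)) ∩ {s | (∑ i, s i) ≤ t} := by
      ext s; simp [Set.mem_pi, Pi.le_def]
    rw [e]
    exact (MeasurableSet.univ_pi fun i => measurableSet_Ici).inter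
      (measurableSet_le (Finset.measurable_sum _ fun i _ => measurable_pi_apply i)
        measurable_const)
  exact Measurable.ite h1
    (Finset.measurable_prod _ fun i _ => gg_measurable.comp (measurable_pi_apply i))
    measurable_const

lemma FF_neg (n : ℕ) {t : ℝ} (ht : t < 0) : FF n t = 0 := by
  unfold FF
  have h : ∀ s : Fin n → ℝ,
      (if (∀ i, 0 ≤ s i) ∧ (∑ i, s i) ≤ t then ∏ i, gg (s i) else 0) = 0 := by
    intro s
    rw [if_neg]
    rintro ⟨h1, h2⟩
    have : (0 : ℝ) ≤ ∑ i, s i := Finset.sum_nonneg fun i _ => h1 i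
    linarith
  simp_rw [h]
  exact lintegral_zero

lemma FF_zero {t : ℝ} (ht : 0 ≤ t) : FF 0 t = 1 := by
  unfold FF
  have : ∀ s : Fin 0 → ℝ,
      (if (∀ i, 0 ≤ s i) ∧ (∑ i, s i) ≤ t then ∏ i, gg (s i) else 0) = 1 := by
    intro s
    rw [if_pos ⟨fun i => i.elim0, by simpa using ht⟩]
    simp
  simp_rw [this]
  rw [lintegral_const, one_mul, volume_pi, Measure.pi_univ]
  simp

lemma FF_succ (n : ℕ) (t : ℝ) :
    FF (n + 1) t = ∫⁻ s : ℝ, if 0 ≤ s then gg s * FF n (t - s) else 0 := by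
  classical
  set e := MeasurableEquiv.piFinSuccAbove (fun _ : Fin (n + 1) => ℝ) 0 with he
  have hmp : MeasurePreserving e volume volume :=
    volume_preserving_piFinSuccAbove (fun _ : Fin (n + 1) => ℝ) 0
  set ψ : (Fin (n + 1) → ℝ) → ENNReal := fun s =>
    if (∀ i, 0 ≤ s i) ∧ (∑ i, s i) ≤ t then ∏ i, gg (s i) else 0 with hψ
  have h1 : FF (n + 1) t = ∫⁻ p : ℝ × (Fin n → ℝ), ψ (e.symm p) := by
    rw [FF]
    rw [hmp.lintegral_map_equiv (fun p => ψ (e.symm p)) e]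
    congr 1
    funext x
    simp
    rfl
  have hmeas : Measurable fun p : ℝ × (Fin n → ℝ) => ψ (e.symm p) :=
    (integrand_measurable (n + 1) t).comp e.symm.measurable
  rw [h1, Measure.volume_eq_prod, lintegral_prod _ hmeas.aemeasurable]
  congr 1
  funext s
  have hsymm : ∀ y : Fin n → ℝ, e.symm (s, y) = Fin.cons s y := by
    intro y
    rw [he]
    rw [MeasurableEquiv.piFinSuccAbove_symm_apply]
    exact Fin.insertNth_zero' s y
  by_cases hs : 0 ≤ s
  · rw [if_pos hs]
    have key : ∀ y : Fin n → ℝ, ψ (e.symm (s, y)) =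
        gg s * (if (∀ i, 0 ≤ y i) ∧ (∑ i, y i) ≤ t - s then ∏ i, gg (y i) else 0) := by
      intro y
      rw [hsymm y, hψ]
      beta_reduce
      by_cases hy : (∀ i, 0 ≤ y i) ∧ (∑ i, y i) ≤ t - s
      · have hc : (∀ i, 0 ≤ (Fin.cons s y : Fin (n+1) → ℝ) i) ∧
            (∑ i, (Fin.cons s y : Fin (n+1) → ℝ) i) ≤ t := by
          constructor
          · intro i
            refine Fin.cases ?_ ?_ i
            · simpa using hs
            · intro j; simpa using hy.1 j
          · rw [Fin.sum_cons]; linarith [hy.2]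
        rw [if_pos hc, if_pos hy, Fin.prod_univ_succ]
        simp [Fin.cons_zero, Fin.cons_succ]
      · rw [if_neg, if_neg hy, mul_zero]
        rintro ⟨h1', h2'⟩
        refine hy ⟨fun j => by simpa using h1' j.succ, ?_⟩
        have := h2'
        rw [Fin.sum_cons] at this
        linarith
    simp_rw [key]
    rw [lintegral_const_mul _ (integrand_measurable n (t - s))]
    rfl
  · rw [if_neg hs]
    have key : ∀ y : Fin n → ℝ, ψ (e.symm (s, y)) = 0 := by
      intro y
      rw [hsymm y, hψ]
      beta_reduce
      rw [if_neg]
      rintro ⟨h1', _⟩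
      exact hs (by simpa using h1' 0)
    simp_rw [key]
    simp

lemma beta_eval {b : ℝ} (hb : 0 ≤ b) :
    ∫ u in (0:ℝ)..1, u ^ (-(1:ℝ)/2) * (1 - u) ^ b
      = Real.Gamma (1/2) * Real.Gamma (b+1) / Real.Gamma (b + 3/2) := by
  have hbeta := Complex.Gamma_mul_Gamma_eq_betaIntegral
    (s := (1/2 : ℂ)) (t := ((b : ℂ) + 1)) (by norm_num)
    (by simp; linarith)
  have key : Complex.betaIntegral (1/2) ((b : ℂ) + 1)
      = ((∫ u in (0:ℝ)..1, u ^ (-(1:ℝ)/2) * (1 - u) ^ b : ℝ) : ℂ) := by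
    rw [Complex.betaIntegral, ← intervalIntegral.integral_ofReal]
    apply intervalIntegral.integral_congr
    intro x hx
    rw [Set.uIcc_of_le zero_le_one] at hx
    obtain ⟨hx0, hx1⟩ := hx
    beta_reduce
    have h1 : ((1:ℂ) - (x:ℂ)) = (((1 - x : ℝ)) : ℂ) := by push_cast; ring
    have e1 : ((1/2 : ℂ) - 1) = ((-(1:ℝ)/2 : ℝ) : ℂ) := by push_cast; ring
    have e2 : ((b : ℂ) + 1 - 1) = ((b : ℝ) : ℂ) := by push_cast; ring
    rw [h1, e1, e2, ← Complex.ofReal_cpow hx0, ← Complex.ofReal_cpow (by linarith)]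
    push_cast
    ring
  rw [key] at hbeta
  have hg : Complex.Gamma (1/2 : ℂ) = ((Real.Gamma (1/2) : ℝ) : ℂ) := by
    rw [show (1/2 : ℂ) = ((1/2 : ℝ) : ℂ) by norm_num, Complex.Gamma_ofReal]
  have hg2 : Complex.Gamma ((b : ℂ) + 1) = ((Real.Gamma (b + 1) : ℝ) : ℂ) := by
    rw [show ((b : ℂ) + 1) = ((b + 1 : ℝ) : ℂ) by push_cast; ring, Complex.Gamma_ofReal]
  have hg3 : Complex.Gamma (1/2 + ((b : ℂ) + 1)) = ((Real.Gamma (b + 3/2) : ℝ) : ℂ) := by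
    rw [show (1/2 + ((b : ℂ) + 1)) = ((b + 3/2 : ℝ) : ℂ) by push_cast; ring,
      Complex.Gamma_ofReal]
  rw [hg, hg2, hg3] at hbeta
  have hne : Real.Gamma (b + 3/2) ≠ 0 := (Real.Gamma_pos_of_pos (by linarith)).ne'
  have hreal : Real.Gamma (1/2) * Real.Gamma (b+1)
      = Real.Gamma (b + 3/2) * ∫ u in (0:ℝ)..1, u ^ (-(1:ℝ)/2) * (1 - u) ^ b := by
    exact_mod_cast hbeta
  rw [eq_div_iff hne]
  linarith [hreal]

lemma scalar_integral {t : ℝ} (ht : 0 < t) (b : ℝ) (hb : 0 ≤ b) :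
    ∫ s in (0:ℝ)..t, s ^ (-(1:ℝ)/2) * (t - s) ^ b
      = t ^ (b + 1/2) * ∫ u in (0:ℝ)..1, u ^ (-(1:ℝ)/2) * (1 - u) ^ b := by
  have h := intervalIntegral.smul_integral_comp_mul_left
    (a := (0:ℝ)) (b := (1:ℝ)) (fun s => s ^ (-(1:ℝ)/2) * (t - s) ^ b) t
  rw [mul_zero, mul_one] at h
  rw [← h]
  have congr1 : ∫ u in (0:ℝ)..1, (t * u) ^ (-(1:ℝ)/2) * (t - t * u) ^ b
      = ∫ u in (0:ℝ)..1, (t ^ (-(1:ℝ)/2) * t ^ b) * (u ^ (-(1:ℝ)/2) * (1 - u) ^ b) := by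
    apply intervalIntegral.integral_congr
    intro u hu
    rw [Set.uIcc_of_le zero_le_one] at hu
    obtain ⟨hu0, hu1⟩ := hu
    beta_reduce
    rw [show t - t * u = t * (1 - u) by ring, Real.mul_rpow ht.le hu0,
      Real.mul_rpow ht.le (by linarith)]
    ring
  rw [congr1, intervalIntegral.integral_const_mul, smul_eq_mul]
  rw [← mul_assoc]
  congr 1
  rw [show t * (t ^ (-(1:ℝ)/2) * t ^ b) = t ^ (1:ℝ) * t ^ (-(1:ℝ)/2) * t ^ b by
    rw [Real.rpow_one]; ring]
  rw [← Real.rpow_add ht, ← Real.rpow_add ht]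
  norm_num
  rw [add_comm]

lemma CC_pos (n : ℕ) : 0 < CC n :=
  div_pos (Real.rpow_pos_of_pos Real.pi_pos _) (Real.Gamma_pos_of_pos (by positivity))

lemma CC_succ (n : ℕ) :
    CC n * (Real.Gamma (1/2) * Real.Gamma ((n:ℝ)/2 + 1) / Real.Gamma ((n:ℝ)/2 + 3/2))
      = CC (n+1) := by
  have hπ := Real.pi_pos
  have h1 : Real.Gamma ((n:ℝ)/2 + 1) ≠ 0 := (Real.Gamma_pos_of_pos (by positivity)).ne'
  have h2 : Real.Gamma ((n:ℝ)/2 + 3/2) ≠ 0 := (Real.Gamma_pos_of_pos (by positivity)).ne'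
  have hsq : Real.Gamma (1/2) = Real.pi ^ ((1:ℝ)/2) := by
    rw [Real.Gamma_one_half_eq, Real.sqrt_eq_rpow]
  unfold CC
  have hcast : ((n+1 : ℕ) : ℝ)/2 + 1 = (n:ℝ)/2 + 3/2 := by push_cast; ring
  have hpow : Real.pi ^ (((n+1 : ℕ) : ℝ)/2) = Real.pi ^ ((n:ℝ)/2) * Real.pi ^ ((1:ℝ)/2) := by
    rw [← Real.rpow_add hπ]; congr 1; push_cast; ring
  rw [hcast, hpow, hsq]
  field_simp

lemma FF_le : ∀ (n : ℕ) (t : ℝ), 0 < t → FF n t ≤ ENNReal.ofReal (CC n * t ^ ((n:ℝ)/2)) := by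
  intro n
  induction n with
  | zero =>
    intro t ht
    rw [FF_zero ht.le]
    have h : CC 0 * t ^ (((0:ℕ):ℝ)/2) = 1 := by
      rw [CC]
      norm_num [Real.Gamma_one, Real.rpow_zero]
    rw [h]
    simp
  | succ n ih =>
    intro t ht
    rw [FF_succ]
    set f : ℝ → ℝ := fun s => s ^ (-(1:ℝ)/2) * (CC n * (t - s) ^ ((n:ℝ)/2)) with hf
    have hae : ∀ᵐ s : ℝ, (if 0 ≤ s then gg s * FF n (t - s) else 0)
        ≤ Set.indicator (Set.Ioo 0 t) (fun s => ENNReal.ofReal (f s)) s := by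
      have hne : ∀ᵐ s : ℝ, s ≠ t := by
        rw [ae_iff]
        simpa [Set.setOf_eq_eq_singleton] using (volume_singleton (a := t))
      filter_upwards [hne] with s hsne
      by_cases hs : 0 ≤ s
      · rw [if_pos hs]
        rcases eq_or_lt_of_le hs with h0 | h0
        · have : gg s = 0 := by
            rw [← h0, gg, Real.zero_rpow (by norm_num)]
            simp
          rw [this, zero_mul]
          exact zero_le
        · rcases lt_or_gt_of_ne (fun h => hsne h) with hst | hst
          · rw [Set.indicator_of_mem (Set.mem_Ioo.2 ⟨h0, hst⟩)]
            have hsub : (0:ℝ) < t - s := by linarith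
            calc gg s * FF n (t - s)
                ≤ gg s * ENNReal.ofReal (CC n * (t - s) ^ ((n:ℝ)/2)) :=
                  mul_le_mul_right (ih (t - s) hsub) _
              _ = ENNReal.ofReal (f s) := by
                  rw [gg, ← ENNReal.ofReal_mul (rpow_neg_half_nonneg s)]
          · rw [FF_neg n (by linarith : t - s < 0), mul_zero]
            exact zero_le
      · rw [if_neg hs]
        exact zero_le
    refine le_trans (lintegral_mono_ae hae) ?_
    rw [lintegral_indicator measurableSet_Ioo]
    have hfm : AEStronglyMeasurable f (volume.restrict (Set.Ioo 0 t)) := by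
      apply Measurable.aestronglyMeasurable
      exact (measurable_id.pow measurable_const).mul
        (((measurable_const.sub measurable_id).pow measurable_const).const_mul _)
    have hnn : 0 ≤ᵐ[volume.restrict (Set.Ioo 0 t)] f := by
      apply ae_restrict_of_forall_mem measurableSet_Ioo
      intro s hs
      have : (0:ℝ) ≤ t - s := by linarith [hs.2]
      exact mul_nonneg (rpow_neg_half_nonneg s)
        (mul_nonneg (CC_pos n).le (Real.rpow_nonneg this _))
    have hint : IntegrableOn f (Set.Ioo 0 t) := by
      have hbase : IntegrableOn (fun s : ℝ => s ^ (-(1:ℝ)/2) * (CC n * t ^ ((n:ℝ)/2)))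
          (Set.Ioo 0 t) := by
        have := (intervalIntegral.intervalIntegrable_rpow' (a := 0) (b := t)
          (r := -(1:ℝ)/2) (by norm_num)).mul_const (CC n * t ^ ((n:ℝ)/2))
        rwa [intervalIntegrable_iff_integrableOn_Ioo_of_le ht.le] at this
      apply hbase.integrable.mono' hfm
      apply ae_restrict_of_forall_mem measurableSet_Ioo
      intro s hs
      have h1 : (0:ℝ) ≤ t - s := by linarith [hs.2]
      have h2 : (0:ℝ) ≤ s ^ (-(1:ℝ)/2) := rpow_neg_half_nonneg s
      have h3 : (t - s) ^ ((n:ℝ)/2) ≤ t ^ ((n:ℝ)/2) :=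
        Real.rpow_le_rpow h1 (by linarith [hs.1]) (by positivity)
      rw [Real.norm_eq_abs, abs_of_nonneg (mul_nonneg h2 (mul_nonneg (CC_pos n).le
        (Real.rpow_nonneg h1 _)))]
      have h4 : (0:ℝ) ≤ CC n := (CC_pos n).le
      exact mul_le_mul_of_nonneg_left (mul_le_mul_of_nonneg_left h3 h4) h2
    rw [← ofReal_integral_eq_lintegral_ofReal hint hnn]
    apply ENNReal.ofReal_le_ofReal
    rw [← integral_Ioc_eq_integral_Ioo, ← intervalIntegral.integral_of_le ht.le]
    have hcongr : ∫ s in (0:ℝ)..t, f s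
        = CC n * ∫ s in (0:ℝ)..t, s ^ (-(1:ℝ)/2) * (t - s) ^ ((n:ℝ)/2) := by
      rw [← intervalIntegral.integral_const_mul]
      apply intervalIntegral.integral_congr
      intro u _
      simp only [hf]
      ring
    rw [hcongr, scalar_integral ht ((n:ℝ)/2) (by positivity),
      beta_eval (b := (n:ℝ)/2) (by positivity)]
    have hexp : (((n+1:ℕ)):ℝ)/2 = (n:ℝ)/2 + 1/2 := by push_cast; ring
    exact le_of_eq (by rw [hexp, ← CC_succ n]; ring)

lemma aFun_eq_s7 (n : ℕ) (t : ℝ) : aFun n t = (FF n t).toReal := by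
  classical
  rw [aFun]
  set S := Set.univ.pi fun _ : Fin n => Set.Icc (0:ℝ) t with hS
  have hSm : MeasurableSet S := MeasurableSet.univ_pi fun _ => measurableSet_Icc
  set φ : (Fin n → ℝ) → ℝ := fun s =>
    (if (∑ i, s i) ≤ t then ∏ i, (s i) ^ (-(1:ℝ)/2) else 0) with hφ
  have hnn : 0 ≤ᵐ[volume.restrict S] φ := by
    apply Filter.Eventually.of_forall
    intro s
    simp only [hφ]
    split
    · exact Finset.prod_nonneg fun i _ => rpow_neg_half_nonneg _
    · exact le_refl 0
  have hmeas : AEStronglyMeasurable φ (volume.restrict S) := by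
    apply Measurable.aestronglyMeasurable
    apply Measurable.ite
      (measurableSet_le (Finset.measurable_sum _ fun i _ => measurable_pi_apply i)
        measurable_const)
    · exact Finset.measurable_prod _ fun i _ =>
        (measurable_id.pow measurable_const).comp (measurable_pi_apply i)
    · exact measurable_const
  rw [integral_eq_lintegral_of_nonneg_ae hnn hmeas]
  congr 1
  rw [FF, ← lintegral_indicator hSm]
  apply lintegral_congr
  intro s
  by_cases hmem : s ∈ S
  · rw [Set.indicator_of_mem hmem]
    have hpos : ∀ i, 0 ≤ s i := fun i => (hmem i (Set.mem_univ i)).1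
    simp only [hφ]
    by_cases hsum : (∑ i, s i) ≤ t
    · rw [if_pos hsum, if_pos ⟨hpos, hsum⟩,
        ENNReal.ofReal_prod_of_nonneg fun i _ => rpow_neg_half_nonneg _]
      rfl
    · rw [if_neg hsum, if_neg (fun h => hsum h.2)]
      simp
  · rw [Set.indicator_of_notMem hmem, if_neg]
    rintro ⟨h1, h2⟩
    apply hmem
    intro i _
    refine ⟨h1 i, ?_⟩
    calc s i ≤ ∑ j, s j := Finset.single_le_sum (fun j _ => h1 j) (Finset.mem_univ i)
      _ ≤ t := h2

lemma Gamma_lb : ∀ m : ℕ,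
    (9/10) * Real.sqrt ((m:ℝ) + 4/5) * (Nat.factorial m : ℝ) ≤ Real.Gamma ((m:ℝ) + 3/2) := by
  intro m
  induction m with
  | zero =>
    simp only [Nat.cast_zero, Nat.factorial_zero, Nat.cast_one, mul_one, zero_add]
    have h32 : Real.Gamma (3/2) = Real.sqrt Real.pi / 2 := by
      have h := Real.Gamma_add_one (s := 1/2) (by norm_num)
      rw [show (1/2 : ℝ) + 1 = 3/2 by norm_num] at h
      rw [h, Real.Gamma_one_half_eq]; ring
    rw [h32]
    have h1 : (9/10:ℝ) * Real.sqrt (4/5) = Real.sqrt ((9/10)^2 * (4/5)) := by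
      rw [Real.sqrt_mul (by positivity), Real.sqrt_sq (by norm_num : (0:ℝ) ≤ 9/10)]
    have h2 : Real.sqrt Real.pi / 2 = Real.sqrt (Real.pi * (1/2)^2) := by
      rw [Real.sqrt_mul Real.pi_pos.le, Real.sqrt_sq (by norm_num : (0:ℝ) ≤ 1/2)]
      ring
    rw [h1, h2]
    apply Real.sqrt_le_sqrt
    nlinarith [Real.pi_gt_three]
  | succ m ihm =>
    have hrec : Real.Gamma (((m+1:ℕ):ℝ) + 3/2) = ((m:ℝ) + 3/2) * Real.Gamma ((m:ℝ) + 3/2) := by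
      rw [show ((m+1:ℕ):ℝ) + 3/2 = ((m:ℝ) + 3/2) + 1 by push_cast; ring,
        Real.Gamma_add_one (by positivity)]
    have key : ((m:ℝ)+1) * Real.sqrt ((m:ℝ) + 9/5) ≤ ((m:ℝ)+3/2) * Real.sqrt ((m:ℝ) + 4/5) := by
      have h1 : ((m:ℝ)+1) * Real.sqrt ((m:ℝ)+9/5) = Real.sqrt (((m:ℝ)+1)^2 * ((m:ℝ)+9/5)) := by
        rw [Real.sqrt_mul (by positivity), Real.sqrt_sq (by positivity)]
      have h2 : ((m:ℝ)+3/2) * Real.sqrt ((m:ℝ)+4/5)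
          = Real.sqrt (((m:ℝ)+3/2)^2 * ((m:ℝ)+4/5)) := by
        rw [Real.sqrt_mul (by positivity), Real.sqrt_sq (by positivity)]
      rw [h1, h2]
      apply Real.sqrt_le_sqrt
      have hm : (0:ℝ) ≤ (m:ℝ) := Nat.cast_nonneg m
      nlinarith [hm]
    have hfact : ((Nat.factorial (m+1) : ℕ) : ℝ) = ((m:ℝ)+1) * (Nat.factorial m : ℝ) := by
      rw [Nat.factorial_succ]; push_cast; ring
    have hsqarg : ((m+1:ℕ):ℝ) + 4/5 = (m:ℝ) + 9/5 := by push_cast; ring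
    rw [hrec, hfact, hsqarg]
    calc (9/10) * Real.sqrt ((m:ℝ) + 9/5) * (((m:ℝ)+1) * (Nat.factorial m : ℝ))
        = (((m:ℝ)+1) * Real.sqrt ((m:ℝ)+9/5)) * ((9/10) * (Nat.factorial m : ℝ)) := by ring
      _ ≤ (((m:ℝ)+3/2) * Real.sqrt ((m:ℝ)+4/5)) * ((9/10) * (Nat.factorial m : ℝ)) := by
          apply mul_le_mul_of_nonneg_right key
          positivity
      _ = ((m:ℝ)+3/2) * ((9/10) * Real.sqrt ((m:ℝ)+4/5) * (Nat.factorial m : ℝ)) := by ring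
      _ ≤ ((m:ℝ)+3/2) * Real.Gamma ((m:ℝ) + 3/2) := by
          apply mul_le_mul_of_nonneg_left ihm
          positivity

/-- **(10.12):** there is a constant `c` such that `Σ_{n≥1} a_n(t) ≤ c·e^{πt}` for every
`t > 0` (the series being summable). -/
theorem tsum_aFun_le : ∃ c : ℝ, ∀ t : ℝ, 0 < t →
    (Summable fun n : ℕ => aFun (n + 1) t) ∧
      (∑' n : ℕ, aFun (n + 1) t) ≤ c * Real.exp (Real.pi * t) := by
  use 4
  intro t ht
  set x := Real.pi * t with hx
  have hxpos : 0 < x := mul_pos Real.pi_pos ht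
  set v : ℕ → ℝ := fun k => x ^ ((k:ℝ)/2) / Real.Gamma ((k:ℝ)/2 + 1) with hv
  have hΓpos : ∀ y : ℝ, 0 < y → 0 < Real.Gamma y := fun y hy => Real.Gamma_pos_of_pos hy
  have hv_nonneg : ∀ k, 0 ≤ v k := by
    intro k
    exact div_nonneg (Real.rpow_nonneg hxpos.le _) (hΓpos _ (by positivity)).le
  -- aFun (n+1) t ≤ v (n+1)
  have hterm : ∀ n : ℕ, aFun (n+1) t ≤ v (n+1) := by
    intro n
    rw [aFun_eq_s7]
    apply ENNReal.toReal_le_of_le_ofReal (hv_nonneg (n+1))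
    refine le_trans (FF_le (n+1) t ht) (le_of_eq ?_)
    congr 1
    show CC (n+1) * t ^ (((n+1:ℕ):ℝ)/2) = v (n+1)
    rw [hv, CC, hx]
    beta_reduce
    rw [Real.mul_rpow Real.pi_pos.le ht.le]
    ring
  -- paired formulas
  have hv_even : ∀ k : ℕ, v (2*k+2) = x ^ (k+1) / (Nat.factorial (k+1) : ℝ) := by
    intro k
    rw [hv]
    beta_reduce
    have h1 : ((2*k+2:ℕ):ℝ)/2 = ((k+1:ℕ):ℝ) := by push_cast; ring
    have h2 : ((2*k+2:ℕ):ℝ)/2 + 1 = ((k+1:ℕ):ℝ) + 1 := by push_cast; ring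
    rw [h2, h1, Real.rpow_natCast, Real.Gamma_nat_eq_factorial]
  have hv_odd : ∀ k : ℕ, v (2*k+1) = x ^ k * Real.sqrt x / Real.Gamma ((k:ℝ) + 3/2) := by
    intro k
    rw [hv]
    beta_reduce
    have h1 : ((2*k+1:ℕ):ℝ)/2 = (k:ℝ) + 1/2 := by push_cast; ring
    have h2 : ((2*k+1:ℕ):ℝ)/2 + 1 = (k:ℝ) + 3/2 := by push_cast; ring
    rw [h2, h1, Real.rpow_add hxpos, Real.rpow_natCast, ← Real.sqrt_eq_rpow]
  have hodd : ∀ k : ℕ, v (2*k+1)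
      ≤ 2 * x^(k+1) / (Nat.factorial (k+1) : ℝ) + x^k / (Nat.factorial k : ℝ) := by
    intro k
    have hkf : (0:ℝ) < (Nat.factorial k : ℝ) := by exact_mod_cast Nat.factorial_pos k
    have hD : (0:ℝ) < (k:ℝ) + 4/5 := by positivity
    have hk1 : (0:ℝ) < (k:ℝ) + 1 := by positivity
    have hlb := Gamma_lb k
    have hden : (0:ℝ) < (9/10) * Real.sqrt ((k:ℝ)+4/5) * (Nat.factorial k:ℝ) := by positivity
    have h1 : v (2*k+1)
        ≤ x^k * Real.sqrt x / ((9/10) * Real.sqrt ((k:ℝ)+4/5) * (Nat.factorial k:ℝ)) := by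
      rw [hv_odd k]
      exact div_le_div_of_nonneg_left (by positivity) hden hlb
    have hs5 : Real.sqrt ((k:ℝ)+4/5) ≠ 0 := by positivity
    have hsq : Real.sqrt x / Real.sqrt ((k:ℝ)+4/5) = Real.sqrt (x/((k:ℝ)+4/5)) := by
      rw [Real.sqrt_div hxpos.le]
    have hy : (0:ℝ) ≤ x/((k:ℝ)+4/5) := by positivity
    have hamgm : Real.sqrt (x/((k:ℝ)+4/5)) ≤ (x/((k:ℝ)+4/5) + 1)/2 := by
      nlinarith [Real.sq_sqrt hy, Real.sqrt_nonneg (x/((k:ℝ)+4/5)),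
        sq_nonneg (Real.sqrt (x/((k:ℝ)+4/5)) - 1)]
    have h2 : x^k * Real.sqrt x / ((9/10) * Real.sqrt ((k:ℝ)+4/5) * (Nat.factorial k:ℝ))
        = (10/9) * (x^k / (Nat.factorial k:ℝ)) * (Real.sqrt x / Real.sqrt ((k:ℝ)+4/5)) := by
      field_simp
    have h3 : v (2*k+1) ≤ (10/9) * (x^k/(Nat.factorial k:ℝ)) * ((x/((k:ℝ)+4/5)+1)/2) := by
      refine le_trans h1 ?_
      rw [h2, hsq]
      exact mul_le_mul_of_nonneg_left hamgm (by positivity)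
    refine le_trans h3 ?_
    have hfs : (Nat.factorial (k+1) : ℝ) = ((k:ℝ)+1) * (Nat.factorial k:ℝ) := by
      rw [Nat.factorial_succ]; push_cast; ring
    rw [hfs, pow_succ]
    have e1 : (5/9:ℝ) * (x/((k:ℝ)+4/5)) ≤ 2*x/((k:ℝ)+1) := by
      rw [mul_div_assoc', div_le_div_iff₀ hD hk1]
      have hm : (0:ℝ) ≤ (k:ℝ) := Nat.cast_nonneg k
      nlinarith [hxpos.le]
    have hcore : (10/9:ℝ) * ((x/((k:ℝ)+4/5)+1)/2) ≤ 2*x/((k:ℝ)+1) + 1 := by linarith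
    calc (10/9) * (x^k/(Nat.factorial k:ℝ)) * ((x/((k:ℝ)+4/5)+1)/2)
        = (x^k/(Nat.factorial k:ℝ)) * ((10/9) * ((x/((k:ℝ)+4/5)+1)/2)) := by ring
      _ ≤ (x^k/(Nat.factorial k:ℝ)) * (2*x/((k:ℝ)+1) + 1) :=
          mul_le_mul_of_nonneg_left hcore (by positivity)
      _ = 2 * (x^k*x) / (((k:ℝ)+1) * (Nat.factorial k:ℝ)) + x^k/(Nat.factorial k:ℝ) := by
          field_simp
  have hpairsum : ∀ N : ℕ, (∑ i ∈ Finset.range (2*N), v (i+1))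
      = ∑ k ∈ Finset.range N, (v (2*k+1) + v (2*k+2)) := by
    intro N
    induction N with
    | zero => simp
    | succ N ih =>
      rw [Finset.sum_range_succ, ← ih, show 2*(N+1) = (2*N+1)+1 by ring,
        Finset.sum_range_succ, Finset.sum_range_succ,
        show (2*N+1)+1 = 2*N+2 by ring]
      ring
  have hafun_nonneg : ∀ n : ℕ, 0 ≤ aFun (n+1) t := by
    intro n
    rw [aFun_eq_s7]
    exact ENNReal.toReal_nonneg
  have hsum_le : ∀ N : ℕ, (∑ i ∈ Finset.range N, aFun (i+1) t) ≤ 4 * Real.exp x := by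
    intro N
    have s1 : (∑ i ∈ Finset.range N, aFun (i+1) t) ≤ ∑ i ∈ Finset.range N, v (i+1) :=
      Finset.sum_le_sum fun i _ => hterm i
    have s2 : (∑ i ∈ Finset.range N, v (i+1)) ≤ ∑ i ∈ Finset.range (2*N), v (i+1) :=
      Finset.sum_le_sum_of_subset_of_nonneg
        (Finset.range_subset_range.2 (by omega)) (fun i _ _ => hv_nonneg (i+1))
    have s3 : (∑ k ∈ Finset.range N, (v (2*k+1) + v (2*k+2)))
        ≤ ∑ k ∈ Finset.range N,
          (3 * (x^(k+1)/(Nat.factorial (k+1):ℝ)) + x^k/(Nat.factorial k:ℝ)) := by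
      apply Finset.sum_le_sum
      intro k _
      have h := hodd k
      rw [hv_even k]
      have : 2 * x^(k+1) / (Nat.factorial (k+1) : ℝ) = 2 * (x^(k+1)/(Nat.factorial (k+1):ℝ)) := by
        ring
      linarith [h]
    have s4 : (∑ k ∈ Finset.range N,
          (3 * (x^(k+1)/(Nat.factorial (k+1):ℝ)) + x^k/(Nat.factorial k:ℝ)))
        = 3 * (∑ k ∈ Finset.range N, x^(k+1)/(Nat.factorial (k+1):ℝ))
          + ∑ k ∈ Finset.range N, x^k/(Nat.factorial k:ℝ) := by
      rw [Finset.sum_add_distrib, Finset.mul_sum]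
    have e1 : (∑ k ∈ Finset.range N, x^(k+1)/(Nat.factorial (k+1):ℝ)) ≤ Real.exp x := by
      have h := Real.sum_le_exp_of_nonneg hxpos.le (N+1)
      rw [Finset.sum_range_succ'] at h
      norm_num at h
      linarith
    have e2 : (∑ k ∈ Finset.range N, x^k/(Nat.factorial k:ℝ)) ≤ Real.exp x :=
      Real.sum_le_exp_of_nonneg hxpos.le N
    calc (∑ i ∈ Finset.range N, aFun (i+1) t)
        ≤ ∑ i ∈ Finset.range (2*N), v (i+1) := le_trans s1 s2
      _ = ∑ k ∈ Finset.range N, (v (2*k+1) + v (2*k+2)) := hpairsum N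
      _ ≤ 3 * (∑ k ∈ Finset.range N, x^(k+1)/(Nat.factorial (k+1):ℝ))
          + ∑ k ∈ Finset.range N, x^k/(Nat.factorial k:ℝ) := by rw [← s4]; exact s3
      _ ≤ 3 * Real.exp x + Real.exp x := by
          have h3 : (0:ℝ) ≤ 3 := by norm_num
          nlinarith [e1, e2]
      _ = 4 * Real.exp x := by ring
  exact ⟨summable_of_sum_range_le hafun_nonneg hsum_le,
    Real.tsum_le_of_sum_range_le hafun_nonneg hsum_le⟩
end

section
/- For every integer n ≥ 1, every real t > 0 and every real α > 0, a_n(t) ≤ t^{n/2} · e^{α} · (π/α)^{n/2}. -/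
open MeasureTheory

/-- **(10.15):** for every `n ≥ 1`, `t > 0` and `α > 0`,
`a_n(t) ≤ t^{n/2} · e^α · (π/α)^{n/2}`. -/
theorem aFun_le_of_alpha (n : ℕ) (hn : 1 ≤ n) (t : ℝ) (ht : 0 < t) (α : ℝ) (hα : 0 < α) :
    aFun n t ≤ t ^ ((n : ℝ) / 2) * Real.exp α * (Real.pi / α) ^ ((n : ℝ) / 2) := by
  have hc : 0 < α / t := div_pos hα ht
  set c := α / t with hc_def
  set G : ℝ → ℝ := (Set.Ioi (0:ℝ)).indicator
    (fun x => x ^ (-(1:ℝ)/2) * Real.exp (-(c * x))) with hG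
  have hGnn : ∀ x, 0 ≤ G x := fun x =>
    Set.indicator_nonneg (fun y hy => mul_nonneg (Real.rpow_nonneg hy.le _) (Real.exp_nonneg _)) x
  -- integrability of G
  have hGint : Integrable G := by
    rw [hG, integrable_indicator_iff measurableSet_Ioi]
    have h := integrableOn_rpow_mul_exp_neg_mul_rpow
      (s := -(1:ℝ)/2) (p := 1) (by norm_num) one_pos hc
    refine h.congr_fun (fun x hx => ?_) measurableSet_Ioi
    dsimp only; rw [Real.rpow_one, neg_mul]
  -- value of ∫ G
  have hGval : ∫ x, G x = (t / α) ^ ((1:ℝ)/2) * Real.sqrt Real.pi := by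
    rw [hG, integral_indicator measurableSet_Ioi]
    have h := Real.integral_rpow_mul_exp_neg_mul_Ioi
      (a := (1:ℝ)/2) (r := c) (by norm_num) hc
    rw [show (1:ℝ)/2 - 1 = -(1:ℝ)/2 by norm_num] at h
    rw [h, Real.Gamma_one_half_eq, hc_def, one_div_div]
  have hmeas : MeasurableSet (Set.univ.pi (fun _ : Fin n => Set.Icc (0:ℝ) t)) :=
    MeasurableSet.univ_pi (fun _ => measurableSet_Icc)
  have hgint : Integrable (fun s : Fin n → ℝ => Real.exp α * ∏ i, G (s i)) :=
    (Integrable.fintype_prod (f := fun _ : Fin n => G) (fun _ => hGint)).const_mul _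
  have hle : aFun n t ≤ ∫ s : Fin n → ℝ, Real.exp α * ∏ i, G (s i) := by
    rw [aFun, ← integral_indicator hmeas]
    refine integral_mono_of_nonneg (Filter.Eventually.of_forall ?_) hgint
      (Filter.Eventually.of_forall ?_)
    · intro s
      refine Set.indicator_nonneg (fun s hs => ?_) s
      split
      · exact Finset.prod_nonneg fun i _ =>
          Real.rpow_nonneg ((Set.mem_univ_pi.mp hs i).1) _
      · exact le_rfl
    · intro s
      have hrhs : 0 ≤ Real.exp α * ∏ i, G (s i) :=
        mul_nonneg (Real.exp_nonneg _) (Finset.prod_nonneg fun i _ => hGnn _)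
      by_cases hmem : s ∈ Set.univ.pi (fun _ : Fin n => Set.Icc (0:ℝ) t)
      · rw [Set.indicator_of_mem hmem]
        split_ifs with hsum
        · by_cases hpos : ∀ i, 0 < s i
          · have hGi : ∀ i, G (s i) = (s i) ^ (-(1:ℝ)/2) * Real.exp (-(c * s i)) :=
              fun i => Set.indicator_of_mem (hpos i) _
            calc ∏ i, (s i) ^ (-(1:ℝ)/2)
                = (∏ i, G (s i)) * Real.exp (c * ∑ i, s i) := by
                  simp_rw [hGi, Finset.prod_mul_distrib, ← Real.exp_sum,
                    mul_assoc, ← Real.exp_add]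
                  rw [show ∑ i, -(c * s i) = -(c * ∑ i, s i) by
                    simp [Finset.mul_sum]]
                  simp
              _ ≤ (∏ i, G (s i)) * Real.exp α := by
                  refine mul_le_mul_of_nonneg_left ?_
                    (Finset.prod_nonneg fun i _ => hGnn _)
                  refine Real.exp_le_exp.mpr ?_
                  calc c * ∑ i, s i ≤ c * t := by
                        exact mul_le_mul_of_nonneg_left hsum hc.le
                    _ = α := by rw [hc_def]; field_simp
              _ = Real.exp α * ∏ i, G (s i) := mul_comm _ _
          · push_neg at hpos
            obtain ⟨i, hi⟩ := hpos
            have h0 : s i = 0 := le_antisymm hi (Set.mem_univ_pi.mp hmem i).1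
            rw [Finset.prod_eq_zero (Finset.mem_univ i)
              (by rw [h0]; exact Real.zero_rpow (by norm_num))]
            exact hrhs
        · exact hrhs
      · rw [Set.indicator_of_notMem hmem]; exact hrhs
  have hval : ∫ s : Fin n → ℝ, Real.exp α * ∏ i, G (s i)
      = Real.exp α * ((t/α) ^ ((1:ℝ)/2) * Real.sqrt Real.pi) ^ n := by
    rw [integral_const_mul, MeasureTheory.volume_pi, MeasureTheory.integral_fintype_prod_eq_pow (ι := Fin n) G,
      hGval, Fintype.card_fin]
  have halg : ((t/α) ^ ((1:ℝ)/2) * Real.sqrt Real.pi) ^ n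
      = t ^ ((n:ℝ)/2) * (Real.pi/α) ^ ((n:ℝ)/2) := by
    rw [Real.sqrt_eq_rpow, ← Real.mul_rpow (by positivity) Real.pi_pos.le,
      show t/α * Real.pi = t * (Real.pi/α) by ring,
      ← Real.rpow_natCast (_ ^ ((1:ℝ)/2)) n, ← Real.rpow_mul (by positivity),
      Real.mul_rpow ht.le (by positivity),
      show (1:ℝ)/2 * (n:ℕ) = (n:ℝ)/2 by ring]
  calc aFun n t ≤ ∫ s : Fin n → ℝ, Real.exp α * ∏ i, G (s i) := hle
    _ = t ^ ((n:ℝ)/2) * Real.exp α * (Real.pi/α) ^ ((n:ℝ)/2) := by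
        rw [hval, halg]; ring
end

section
/- Exact value of a_n: for every integer n ≥ 1 and every real t > 0, a_n(t) = π^{n/2} · t^{n/2} / Γ(n/2 + 1), where Γ is the Gamma function. -/
open MeasureTheory

namespace AFunAux

open scoped ENNReal

/-- The `ℝ≥0∞`-valued integrand, over the whole space. -/
noncomputable def g (n : ℕ) (t : ℝ) (s : Fin n → ℝ) : ℝ≥0∞ :=
  if (∀ i, 0 ≤ s i) ∧ (∑ i, s i) ≤ t then ∏ i, ENNReal.ofReal ((s i) ^ (-(1 : ℝ) / 2)) else 0

noncomputable def L (n : ℕ) (t : ℝ) : ℝ≥0∞ := ∫⁻ s, g n t s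

lemma measurableSet_cond (n : ℕ) (t : ℝ) :
    MeasurableSet {s : Fin n → ℝ | (∀ i, 0 ≤ s i) ∧ (∑ i, s i) ≤ t} := by
  have h1 : MeasurableSet {s : Fin n → ℝ | ∀ i, 0 ≤ s i} := by
    rw [Set.setOf_forall]
    exact MeasurableSet.iInter fun i =>
      measurableSet_le measurable_const (measurable_pi_apply i)
  have h2 : MeasurableSet {s : Fin n → ℝ | (∑ i, s i) ≤ t} :=
    measurableSet_le (Finset.measurable_sum _ fun i _ => measurable_pi_apply i) measurable_const
  exact h1.inter h2

lemma measurable_g (n : ℕ) (t : ℝ) : Measurable (g n t) := by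
  unfold g
  refine Measurable.ite (measurableSet_cond n t) ?_ measurable_const
  exact Finset.measurable_prod _ fun i _ => by fun_prop

/-- For `t ≥ 0` the (real) integral defining `aFun` equals the `toReal` of `L`. -/
lemma aFun_eq_toReal (n : ℕ) {t : ℝ} (ht : 0 ≤ t) : aFun n t = (L n t).toReal := by
  set S := Set.univ.pi (fun _ : Fin n => Set.Icc (0 : ℝ) t) with hSdef
  have hS : MeasurableSet S := MeasurableSet.univ_pi fun _ => measurableSet_Icc
  have hmeas : Measurable (fun s : Fin n → ℝ =>
      if (∑ i, s i) ≤ t then ∏ i, (s i) ^ (-(1 : ℝ) / 2) else 0) := by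
    refine Measurable.ite ?_ ?_ measurable_const
    · exact measurableSet_le (Finset.measurable_sum _ fun i _ => measurable_pi_apply i)
        measurable_const
    · exact Finset.measurable_prod _ fun i _ => by fun_prop
  have hnn : 0 ≤ᵐ[volume.restrict S] (fun s : Fin n → ℝ =>
      if (∑ i, s i) ≤ t then ∏ i, (s i) ^ (-(1 : ℝ) / 2) else 0) := by
    filter_upwards [ae_restrict_mem hS] with s hs
    simp only [Pi.zero_apply]
    by_cases h : (∑ i, s i) ≤ t
    · rw [if_pos h]
      exact Finset.prod_nonneg fun i _ =>
        Real.rpow_nonneg ((hs i (Set.mem_univ i)).1) _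
    · rw [if_neg h]
  rw [aFun, integral_eq_lintegral_of_nonneg_ae hnn hmeas.aestronglyMeasurable.restrict]
  congr 1
  rw [← lintegral_indicator hS, L]
  refine lintegral_congr fun s => ?_
  by_cases hs : s ∈ S
  · rw [Set.indicator_of_mem hs]
    by_cases hsum : (∑ i, s i) ≤ t
    · rw [if_pos hsum, g, if_pos ⟨fun i => (hs i (Set.mem_univ i)).1, hsum⟩]
      exact ENNReal.ofReal_prod_of_nonneg fun i _ =>
        Real.rpow_nonneg ((hs i (Set.mem_univ i)).1) _
    · rw [if_neg hsum, g, if_neg (fun h => hsum h.2), ENNReal.ofReal_zero]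
  · rw [Set.indicator_of_notMem hs, g, if_neg]
    rintro ⟨h0, hsum⟩
    refine hs fun i _ => ⟨h0 i, ?_⟩
    calc s i ≤ ∑ j, s j := Finset.single_le_sum (fun j _ => h0 j) (Finset.mem_univ i)
    _ ≤ t := hsum

lemma L_eq_zero (n : ℕ) (hn : 1 ≤ n) {t : ℝ} (ht : t ≤ 0) : L n t = 0 := by
  set i0 : Fin n := ⟨0, hn⟩ with hi0
  set B : Set (Fin n → ℝ) :=
    Set.univ.pi (fun i => if i = i0 then ({0} : Set ℝ) else Set.univ) with hBdef
  have hB : volume B = 0 := by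
    rw [hBdef, volume_pi_pi]
    refine Finset.prod_eq_zero (Finset.mem_univ i0) ?_
    simp
  have hsub : {s : Fin n → ℝ | g n t s ≠ 0} ⊆ B := by
    intro s hs
    rw [Set.mem_setOf_eq, g] at hs
    have hc : (∀ i, 0 ≤ s i) ∧ (∑ i, s i) ≤ t := by
      by_contra hc
      rw [if_neg hc] at hs
      exact hs rfl
    have hzero : s i0 = 0 := by
      have h1 : s i0 ≤ ∑ j, s j :=
        Finset.single_le_sum (fun j _ => hc.1 j) (Finset.mem_univ i0)
      have h2 := hc.2
      have h3 := hc.1 i0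
      linarith
    rw [hBdef, Set.mem_univ_pi]
    intro i
    by_cases hi : i = i0
    · rw [if_pos hi, Set.mem_singleton_iff, hi, hzero]
    · rw [if_neg hi]
      trivial
  rw [L, lintegral_eq_zero_iff (measurable_g n t), Filter.EventuallyEq, ae_iff]
  exact measure_mono_null (fun s hs => hsub (by simpa using hs)) hB

/-- Real Beta integral formula, derived from the complex one. -/
lemma real_beta {s u a : ℝ} (hs : 0 < s) (hu : 0 < u) (ha : 0 < a) :
    ∫ x in (0:ℝ)..a, x ^ (s - 1) * (a - x) ^ (u - 1)
      = a ^ (s + u - 1) * (Real.Gamma s * Real.Gamma u / Real.Gamma (s + u)) := by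
  have h1 := Complex.betaIntegral_scaled (s : ℂ) (u : ℂ) ha
  have hΓ : Real.Gamma (s + u) ≠ 0 := (Real.Gamma_pos_of_pos (by linarith)).ne'
  have hne : ((Real.Gamma (s + u) : ℝ) : ℂ) ≠ 0 := Complex.ofReal_ne_zero.2 hΓ
  have key := Complex.Gamma_mul_Gamma_eq_betaIntegral
    (s := (s : ℂ)) (t := (u : ℂ)) (by simpa using hs) (by simpa using hu)
  have h2 : Complex.betaIntegral (s : ℂ) (u : ℂ)
      = ((Real.Gamma s * Real.Gamma u / Real.Gamma (s + u) : ℝ) : ℂ) := by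
    rw [← Complex.ofReal_add, Complex.Gamma_ofReal, Complex.Gamma_ofReal,
      Complex.Gamma_ofReal] at key
    push_cast
    rw [eq_div_iff hne, mul_comm, ← key]
  have h3 : (∫ x in (0:ℝ)..a, (x : ℂ) ^ ((s : ℂ) - 1) * ((a : ℂ) - x) ^ ((u : ℂ) - 1))
      = ((∫ x in (0:ℝ)..a, x ^ (s - 1) * (a - x) ^ (u - 1) : ℝ) : ℂ) := by
    rw [← intervalIntegral.integral_ofReal]
    refine intervalIntegral.integral_congr fun x hx => ?_
    rw [Set.uIcc_of_le ha.le] at hx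
    push_cast
    rw [Complex.ofReal_cpow hx.1 (s - 1),
      Complex.ofReal_cpow (by linarith [hx.2] : (0:ℝ) ≤ a - x) (u - 1)]
    push_cast
    ring
  rw [h3, h2] at h1
  have h4 : ((a : ℂ)) ^ ((s : ℂ) + (u : ℂ) - 1) = ((a ^ (s + u - 1) : ℝ) : ℂ) := by
    rw [Complex.ofReal_cpow ha.le (s + u - 1)]
    push_cast
    ring_nf
  rw [h4, ← Complex.ofReal_mul] at h1
  exact_mod_cast h1

lemma g_cons (n : ℕ) (t x : ℝ) (p : Fin n → ℝ) :
    g (n + 1) t (Fin.cons x p)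
      = (if 0 ≤ x then ENNReal.ofReal (x ^ (-(1 : ℝ) / 2)) else 0) * g n (t - x) p := by
  set q : Fin (n+1) → ℝ := Fin.cons x p with hq
  have hforall : (∀ i : Fin (n+1), 0 ≤ q i) ↔ (0 ≤ x ∧ ∀ i, 0 ≤ p i) := by
    constructor
    · intro h
      exact ⟨by simpa [hq] using h 0, fun i => by simpa [hq] using h i.succ⟩
    · rintro ⟨hx, hp⟩ i
      induction i using Fin.cases with
      | zero => simpa [hq] using hx
      | succ j => simpa [hq] using hp j
  have hsum : (∑ i : Fin (n+1), q i) = x + ∑ i, p i := by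
    rw [Fin.sum_univ_succ]
    simp [hq]
  have hprod : (∏ i : Fin (n+1), ENNReal.ofReal ((q i) ^ (-(1:ℝ)/2)))
      = ENNReal.ofReal (x ^ (-(1:ℝ)/2)) * ∏ i, ENNReal.ofReal ((p i) ^ (-(1:ℝ)/2)) := by
    rw [Fin.prod_univ_succ]
    simp [hq]
  by_cases hx : 0 ≤ x
  · by_cases hp : (∀ i, 0 ≤ p i) ∧ (∑ i, p i) ≤ t - x
    · rw [g, if_pos, if_pos hx, g, if_pos hp, hprod]
      exact ⟨hforall.2 ⟨hx, hp.1⟩, by rw [hsum]; linarith [hp.2]⟩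
    · rw [g, if_neg, if_pos hx, g, if_neg hp, mul_zero]
      rintro ⟨h0, hsle⟩
      rw [hsum] at hsle
      exact hp ⟨(hforall.1 h0).2, by linarith⟩
  · rw [g, if_neg, if_neg hx, zero_mul]
    rintro ⟨h0, -⟩
    exact hx (hforall.1 h0).1

lemma L_succ (n : ℕ) (t : ℝ) :
    L (n + 1) t
      = ∫⁻ x : ℝ, (if 0 ≤ x then ENNReal.ofReal (x ^ (-(1 : ℝ) / 2)) else 0) * L n (t - x) := by
  have hmp := (measurePreserving_piFinSuccAbove (fun _ : Fin (n+1) => (volume : Measure ℝ)) 0).symm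
  rw [L, volume_pi, ← hmp.lintegral_comp (measurable_g (n+1) t)]
  have hmeas : Measurable fun y : ℝ × (Fin n → ℝ) =>
      g (n+1) t ((MeasurableEquiv.piFinSuccAbove (fun _ : Fin (n+1) => ℝ) 0).symm y) :=
    (measurable_g (n+1) t).comp (MeasurableEquiv.measurable _)
  rw [lintegral_prod _ hmeas.aemeasurable]
  refine lintegral_congr fun x => ?_
  have hpt : ∀ p : Fin n → ℝ,
      g (n+1) t ((MeasurableEquiv.piFinSuccAbove (fun _ : Fin (n+1) => ℝ) 0).symm (x, p))
        = (if 0 ≤ x then ENNReal.ofReal (x ^ (-(1:ℝ)/2)) else 0) * g n (t - x) p := by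
    intro p
    have he : ((MeasurableEquiv.piFinSuccAbove (fun _ : Fin (n+1) => ℝ) 0).symm (x, p))
        = Fin.cons x p := by
      simp_rw [MeasurableEquiv.piFinSuccAbove_symm_apply, Fin.insertNthEquiv,
        Fin.insertNth_zero]
      rfl
    rw [he, g_cons]
  simp_rw [hpt]
  rw [lintegral_const_mul' _ _ (by split <;> simp)]
  have : (∫⁻ p, g n (t - x) p ∂(Measure.pi fun _ : Fin n => (volume : Measure ℝ)))
      = L n (t - x) := by rw [L, volume_pi]
  rw [← this]

lemma L_eq (n : ℕ) (hn : 1 ≤ n) : ∀ {t : ℝ}, 0 < t →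
    L n t = ENNReal.ofReal
      (Real.pi ^ ((n : ℝ) / 2) * t ^ ((n : ℝ) / 2) / Real.Gamma ((n : ℝ) / 2 + 1)) := by
  induction n, hn using Nat.le_induction with
  | base =>
    intro t ht
    have hmp := ((volume_preserving_funUnique (Fin 1) ℝ).symm _)
    erw [L, ← hmp.lintegral_comp (measurable_g 1 t)]
    have hpt : ∀ x : ℝ, g 1 t ((MeasurableEquiv.funUnique (Fin 1) ℝ).symm x)
        = Set.indicator (Set.Ioc 0 t) (fun y => ENNReal.ofReal (y ^ (-(1:ℝ)/2))) x := by
      intro x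
      have he : (MeasurableEquiv.funUnique (Fin 1) ℝ).symm x = fun _ : Fin 1 => x := rfl
      rw [he, g]
      by_cases hc : (0 ≤ x ∧ x ≤ t)
      · rw [if_pos ⟨fun _ => hc.1, by simpa using hc.2⟩]
        rcases eq_or_lt_of_le hc.1 with h0 | h0
        · rw [Set.indicator_of_notMem (by simp [← h0] : x ∉ Set.Ioc (0:ℝ) t), ← h0]
          simp [Real.zero_rpow (by norm_num : -(1:ℝ)/2 ≠ 0)]
        · rw [Set.indicator_of_mem (Set.mem_Ioc.2 ⟨h0, hc.2⟩)]
          simp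
      · rw [if_neg, Set.indicator_of_notMem]
        · rw [Set.mem_Ioc]
          intro h
          exact hc ⟨h.1.le, h.2⟩
        · intro h
          exact hc ⟨h.1 0, by simpa using h.2⟩
    simp_rw [hpt]
    rw [lintegral_indicator measurableSet_Ioc]
    have hInt : IntegrableOn (fun y : ℝ => y ^ (-(1:ℝ)/2)) (Set.Ioc 0 t) := by
      rw [← intervalIntegrable_iff_integrableOn_Ioc_of_le ht.le]
      exact intervalIntegral.intervalIntegrable_rpow' (by norm_num)
    have hnn : 0 ≤ᵐ[volume.restrict (Set.Ioc 0 t)] fun y : ℝ => y ^ (-(1:ℝ)/2) := by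
      filter_upwards [ae_restrict_mem measurableSet_Ioc] with y hy
      exact Real.rpow_nonneg hy.1.le _
    rw [← ofReal_integral_eq_lintegral_ofReal hInt hnn]
    congr 1
    have hval : ∫ y in Set.Ioc (0:ℝ) t, y ^ (-(1:ℝ)/2) = 2 * t ^ ((1:ℝ)/2) := by
      rw [← intervalIntegral.integral_of_le ht.le,
        integral_rpow (Or.inl (by norm_num : (-1:ℝ) < -(1:ℝ)/2))]
      rw [Real.zero_rpow (by norm_num : -(1:ℝ)/2 + 1 ≠ 0)]
      norm_num
      ring
    have hg32 : Real.Gamma ((1:ℝ)/2 + 1) = (1/2) * Real.sqrt Real.pi := by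
      rw [Real.Gamma_add_one (by norm_num), Real.Gamma_one_half_eq]
    have hsqrt : Real.sqrt Real.pi = Real.pi ^ ((1:ℝ)/2) := Real.sqrt_eq_rpow _
    have hπ : (0:ℝ) < Real.pi ^ ((1:ℝ)/2) := Real.rpow_pos_of_pos Real.pi_pos _
    simp only [Nat.cast_one]
    rw [hval, hg32, hsqrt]
    field_simp
  | succ n hn ih =>
    intro t ht
    rw [L_succ]
    have hΓn : (0:ℝ) < Real.Gamma ((n : ℝ)/2 + 1) :=
      Real.Gamma_pos_of_pos (by positivity)
    have hind : (fun x : ℝ =>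
        (if 0 ≤ x then ENNReal.ofReal (x ^ (-(1:ℝ)/2)) else 0) * L n (t - x))
        = (Set.Ioo 0 t).indicator (fun x => ENNReal.ofReal (x ^ (-(1:ℝ)/2) *
            (Real.pi ^ ((n:ℝ)/2) * (t-x) ^ ((n:ℝ)/2) / Real.Gamma ((n:ℝ)/2+1)))) := by
      funext x
      by_cases hx : x ∈ Set.Ioo 0 t
      · rw [Set.indicator_of_mem hx, if_pos hx.1.le, ih (by linarith [hx.2] : (0:ℝ) < t - x),
          ENNReal.ofReal_mul (Real.rpow_nonneg hx.1.le _)]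
      · rw [Set.indicator_of_notMem hx]
        rw [Set.mem_Ioo, not_and_or] at hx
        push_neg at hx
        rcases hx with hx | hx
        · rcases eq_or_lt_of_le hx with h0 | h0
          · subst h0
            rw [if_pos le_rfl, Real.zero_rpow (by norm_num : -(1:ℝ)/2 ≠ 0),
              ENNReal.ofReal_zero, zero_mul]
          · rw [if_neg (not_le.2 h0), zero_mul]
        · rw [L_eq_zero n hn (by linarith), mul_zero]
    rw [hind, lintegral_indicator measurableSet_Ioo]
    set c : ℝ := Real.pi ^ ((n:ℝ)/2) / Real.Gamma ((n:ℝ)/2+1) with hc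
    have hcnn : 0 ≤ c := div_nonneg (Real.rpow_nonneg Real.pi_pos.le _) hΓn.le
    have hre : ∀ x : ℝ, x ^ (-(1:ℝ)/2) *
        (Real.pi ^ ((n:ℝ)/2) * (t-x) ^ ((n:ℝ)/2) / Real.Gamma ((n:ℝ)/2+1))
        = c * (x ^ (-(1:ℝ)/2) * (t-x) ^ ((n:ℝ)/2)) := by
      intro x
      rw [hc]
      ring
    simp_rw [hre]
    have h1 : IntegrableOn (fun x : ℝ => x ^ (-(1:ℝ)/2)) (Set.Ioo 0 t) := by
      rw [← intervalIntegrable_iff_integrableOn_Ioo_of_le ht.le]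
      exact intervalIntegral.intervalIntegrable_rpow' (by norm_num)
    have hbd : IntegrableOn (fun x : ℝ => x ^ (-(1:ℝ)/2) * t ^ ((n:ℝ)/2)) (Set.Ioo 0 t) :=
      h1.mul_const _
    have hInt0 : IntegrableOn (fun x : ℝ => x ^ (-(1:ℝ)/2) * (t - x) ^ ((n:ℝ)/2))
        (Set.Ioo 0 t) := by
      refine Integrable.mono hbd
        ((by fun_prop : Measurable fun x : ℝ =>
          x ^ (-(1:ℝ)/2) * (t - x) ^ ((n:ℝ)/2)).aestronglyMeasurable) ?_
      filter_upwards [ae_restrict_mem measurableSet_Ioo] with x hx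
      have h0x : (0:ℝ) < x := hx.1
      have hxt : x < t := hx.2
      have e1 : ‖x ^ (-(1:ℝ)/2) * (t - x) ^ ((n:ℝ)/2)‖
          = x ^ (-(1:ℝ)/2) * (t - x) ^ ((n:ℝ)/2) := by
        rw [Real.norm_eq_abs, abs_of_nonneg]
        exact mul_nonneg (Real.rpow_nonneg h0x.le _) (Real.rpow_nonneg (by linarith) _)
      have e2 : ‖x ^ (-(1:ℝ)/2) * t ^ ((n:ℝ)/2)‖ = x ^ (-(1:ℝ)/2) * t ^ ((n:ℝ)/2) := by
        rw [Real.norm_eq_abs, abs_of_nonneg]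
        exact mul_nonneg (Real.rpow_nonneg h0x.le _) (Real.rpow_nonneg ht.le _)
      rw [e1, e2]
      exact mul_le_mul_of_nonneg_left
        (Real.rpow_le_rpow (by linarith) (by linarith) (by positivity))
        (Real.rpow_nonneg h0x.le _)
    have hInt : IntegrableOn (fun x : ℝ => c * (x ^ (-(1:ℝ)/2) * (t - x) ^ ((n:ℝ)/2)))
        (Set.Ioo 0 t) := hInt0.const_mul c
    have hnn : 0 ≤ᵐ[volume.restrict (Set.Ioo 0 t)]
        fun x : ℝ => c * (x ^ (-(1:ℝ)/2) * (t - x) ^ ((n:ℝ)/2)) := by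
      filter_upwards [ae_restrict_mem measurableSet_Ioo] with x hx
      exact mul_nonneg hcnn (mul_nonneg (Real.rpow_nonneg hx.1.le _)
        (Real.rpow_nonneg (by linarith [hx.2]) _))
    rw [← ofReal_integral_eq_lintegral_ofReal hInt hnn]
    congr 1
    rw [MeasureTheory.integral_const_mul]
    have hIoo : ∫ x in Set.Ioo (0:ℝ) t, x ^ (-(1:ℝ)/2) * (t - x) ^ ((n:ℝ)/2)
        = ∫ x in (0:ℝ)..t, x ^ ((1:ℝ)/2 - 1) * (t - x) ^ (((n:ℝ)/2 + 1) - 1) := by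
      rw [intervalIntegral.integral_of_le ht.le, integral_Ioc_eq_integral_Ioo]
      norm_num
    rw [hIoo, real_beta (by norm_num) (by positivity) ht]
    have e1 : (1:ℝ)/2 + ((n:ℝ)/2 + 1) - 1 = ((n+1:ℕ):ℝ)/2 := by push_cast; ring
    have e2 : (1:ℝ)/2 + ((n:ℝ)/2 + 1) = ((n+1:ℕ):ℝ)/2 + 1 := by push_cast; ring
    rw [e1, e2, Real.Gamma_one_half_eq, Real.sqrt_eq_rpow]
    have hΓm : (0:ℝ) < Real.Gamma (((n+1:ℕ):ℝ)/2 + 1) :=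
      Real.Gamma_pos_of_pos (by positivity)
    have hππ : Real.pi ^ ((n:ℝ)/2) * Real.pi ^ ((1:ℝ)/2) = Real.pi ^ (((n+1:ℕ):ℝ)/2) := by
      rw [← Real.rpow_add Real.pi_pos]
      congr 1
      push_cast
      ring
    rw [hc]
    field_simp
    push_cast at hππ ⊢
    linear_combination hππ
  
end AFunAux

/-- **Exact value:** `a_n(t) = π^{n/2} t^{n/2} / Γ(n/2 + 1)` for every `n ≥ 1`, `t > 0`. -/
theorem aFun_eq (n : ℕ) (hn : 1 ≤ n) (t : ℝ) (ht : 0 < t) :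
    aFun n t = Real.pi ^ ((n : ℝ) / 2) * t ^ ((n : ℝ) / 2) / Real.Gamma ((n : ℝ) / 2 + 1) := by
  rw [AFunAux.aFun_eq_toReal n ht.le, AFunAux.L_eq n hn ht, ENNReal.toReal_ofReal]
  exact div_nonneg (mul_nonneg (Real.rpow_nonneg Real.pi_pos.le _)
    (Real.rpow_nonneg ht.le _)) (Real.Gamma_pos_of_pos (by positivity)).le
end

section
/- Dirichlet-type simplex integral: let m ≥ 1 be an integer, t > 0 a real, and α_1, …, α_m real numbers with α_i < 1 for every i. Then, with the convention t_0 = 0, ∫_{0 ≤ t_1 ≤ t_2 ≤ ⋯ ≤ t_m ≤ t} ∏_{i=1}^m (t_i − t_{i−1})^{−α_i} dt_1 ⋯ dt_m = [∏_{i=1}^m Γ(1−α_i) / Γ(1 + m − Σ_{i=1}^m α_i)] · t^{m − Σ_{i=1}^m α_i}; in particular the integral is finite, and it equals a constant depending only on α_1,…,α_m times t^{m − Σα_i}. -/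
open MeasureTheory

/-- The "previous" coordinate: `prevC s i = s (i-1)`, with the convention that it is `0`
when `i = 0` (so that the coordinates represent `0 = t_0 ≤ t_1 ≤ ⋯ ≤ t_m`). -/
def prevC {m : ℕ} (s : Fin m → ℝ) (i : Fin m) : ℝ :=
  if (i : ℕ) = 0 then 0
  else s ⟨(i : ℕ) - 1, Nat.lt_of_le_of_lt (Nat.sub_le _ _) i.2⟩

/-- The ordered simplex `{0 ≤ t_1 ≤ t_2 ≤ ⋯ ≤ t_m ≤ t}`. -/
def orderedSimplex (m : ℕ) (t : ℝ) : Set (Fin m → ℝ) :=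
  {s | (∀ i : Fin m, prevC s i ≤ s i) ∧ ∀ i : Fin m, s i ≤ t}

open scoped ENNReal
open Real Set

lemma measurable_prevC {m : ℕ} (i : Fin m) : Measurable fun s : Fin m → ℝ => prevC s i := by
  unfold prevC
  split_ifs
  · exact measurable_const
  · exact measurable_pi_apply _

lemma measurable_integrand {m : ℕ} (α : Fin m → ℝ) :
    Measurable fun s : Fin m → ℝ =>
      ENNReal.ofReal (∏ i, (s i - prevC s i) ^ (-(α i))) := by
  apply Measurable.ennreal_ofReal
  apply Finset.measurable_prod
  intro i _
  exact (show Measurable fun x : ℝ => x ^ (-(α i)) by fun_prop).comp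
    ((measurable_pi_apply i).sub (measurable_prevC i))

lemma measurableSet_orderedSimplex (m : ℕ) (t : ℝ) : MeasurableSet (orderedSimplex m t) := by
  have h : orderedSimplex m t
      = (⋂ i, {s : Fin m → ℝ | prevC s i ≤ s i}) ∩ ⋂ i, {s : Fin m → ℝ | s i ≤ t} := by
    ext s; simp [orderedSimplex, Set.mem_iInter]
  rw [h]
  exact (MeasurableSet.iInter fun i =>
      measurableSet_le (measurable_prevC i) (measurable_pi_apply i)).inter
    (MeasurableSet.iInter fun i => measurableSet_le (measurable_pi_apply i) measurable_const)

lemma prevC_zero {m : ℕ} (s : Fin (m+1) → ℝ) : prevC s 0 = 0 := rfl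

lemma cons_index {m : ℕ} (x : ℝ) (y : Fin m → ℝ) (k : ℕ) (hk : k < m + 1) :
    (Fin.cons x y : Fin (m+1) → ℝ) ⟨k, hk⟩
      = if h : k = 0 then x else y ⟨k - 1, by omega⟩ := by
  match k with
  | 0 => rfl
  | k+1 =>
    rw [dif_neg (Nat.succ_ne_zero k)]
    exact Fin.cons_succ (α := fun _ => ℝ) x y ⟨k, Nat.lt_of_succ_lt_succ hk⟩

lemma prevC_cons' {m : ℕ} (x : ℝ) (y : Fin m → ℝ) (i : Fin m) :
    prevC (Fin.cons x y) i.succ = prevC (fun j => y j - x) i + x := by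
  unfold prevC
  simp only [Fin.val_succ, Nat.succ_ne_zero, if_false, Nat.add_sub_cancel]
  rw [cons_index]
  by_cases h : (i : ℕ) = 0
  · simp [h]
  · simp [h]

lemma cons_mem_simplex {m : ℕ} (t x : ℝ) (y : Fin m → ℝ) :
    (Fin.cons x y : Fin (m+1) → ℝ) ∈ orderedSimplex (m+1) t
      ↔ (0 ≤ x ∧ x ≤ t) ∧ (fun j => y j - x) ∈ orderedSimplex m (t - x) := by
  simp only [orderedSimplex, Set.mem_setOf_eq, Fin.forall_fin_succ, prevC_cons',
    Fin.cons_succ, Fin.cons_zero, prevC_zero]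
  constructor
  · rintro ⟨⟨h0, hs⟩, h1, h2⟩
    exact ⟨⟨h0, h1⟩, fun i => by linarith [hs i], fun i => by linarith [h2 i]⟩
  · rintro ⟨⟨h0, h1⟩, hs, h2⟩
    exact ⟨⟨h0, fun i => by linarith [hs i]⟩, h1, fun i => by linarith [h2 i]⟩

lemma prod_cons {m : ℕ} (α : Fin (m+1) → ℝ) (x : ℝ) (y : Fin m → ℝ) :
    ∏ j, ((Fin.cons x y : Fin (m+1) → ℝ) j - prevC (Fin.cons x y) j) ^ (-(α j))
      = x ^ (-(α 0)) *
        ∏ i, ((y i - x) - prevC (fun j => y j - x) i) ^ (-(α i.succ)) := by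
  rw [Fin.prod_univ_succ]
  congr 1
  · rw [Fin.cons_zero, prevC_zero, sub_zero]
  · refine Finset.prod_congr rfl fun i _ => ?_
    rw [Fin.cons_succ, prevC_cons',
      show y i - (prevC (fun j => y j - x) i + x)
        = (y i - x) - prevC (fun j => y j - x) i from by ring]

lemma realBeta01 {a b : ℝ} (ha : 0 < a) (hb : 0 < b) :
    ∫ x in (0:ℝ)..1, x ^ (a-1) * (1-x) ^ (b-1)
      = Real.Gamma a * Real.Gamma b / Real.Gamma (a+b) := by
  have h := Complex.Gamma_mul_Gamma_eq_betaIntegral (s := a) (t := b)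
    (by simpa using ha) (by simpa using hb)
  have hbeta : Complex.betaIntegral a b
      = ((∫ x in (0:ℝ)..1, x ^ (a-1) * (1-x) ^ (b-1) : ℝ) : ℂ) := by
    rw [Complex.betaIntegral, ← intervalIntegral.integral_ofReal]
    refine intervalIntegral.integral_congr fun x hx => ?_
    rw [Set.uIcc_of_le zero_le_one] at hx
    rw [Complex.ofReal_mul, Complex.ofReal_cpow hx.1,
      Complex.ofReal_cpow (by linarith [hx.2] : (0:ℝ) ≤ 1 - x)]
    push_cast; ring
  have hG : Real.Gamma (a+b) ≠ 0 := (Real.Gamma_pos_of_pos (by linarith)).ne'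
  rw [hbeta, ← Complex.ofReal_add, Complex.Gamma_ofReal, Complex.Gamma_ofReal,
    Complex.Gamma_ofReal, ← Complex.ofReal_mul, ← Complex.ofReal_mul] at h
  have h2 : Real.Gamma a * Real.Gamma b
      = Real.Gamma (a+b) * ∫ x in (0:ℝ)..1, x ^ (a-1) * (1-x) ^ (b-1) :=
    mod_cast h
  field_simp [h2]
  rw [h2]; ring


lemma betaIntegrable {a b t : ℝ} (ha : 0 < a) (hb : 0 < b) (ht : 0 < t) :
    IntervalIntegrable (fun x => x ^ (a-1) * (t-x) ^ (b-1)) volume 0 t := by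
  have h1 : IntervalIntegrable (fun x => x ^ (a-1) * (t-x) ^ (b-1)) volume 0 (t/2) := by
    refine (intervalIntegral.intervalIntegrable_rpow' (by linarith)).mul_continuousOn ?_
    apply ContinuousOn.rpow_const (by fun_prop)
    intro x hx
    rw [Set.uIcc_of_le (by linarith)] at hx
    left; linarith [hx.2]
  have h2 : IntervalIntegrable (fun x => x ^ (a-1) * (t-x) ^ (b-1)) volume (t/2) t := by
    have hr : IntervalIntegrable (fun x => (t-x) ^ (b-1)) volume (t/2) t := by
      have := (intervalIntegral.intervalIntegrable_rpow' (r := b-1) (by linarith)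
        (a := 0) (b := t/2)).comp_sub_left t
      simpa [show t - t/2 = t/2 by ring] using this.symm
    refine hr.continuousOn_mul ?_
    apply ContinuousOn.rpow_const (by fun_prop)
    intro x hx
    rw [Set.uIcc_of_le (by linarith)] at hx
    left; linarith [hx.1]
  exact h1.trans h2

lemma betaScaled {a b t : ℝ} (ha : 0 < a) (hb : 0 < b) (ht : 0 < t) :
    ∫ x in (0:ℝ)..t, x ^ (a-1) * (t-x) ^ (b-1)
      = Real.Gamma a * Real.Gamma b / Real.Gamma (a+b) * t ^ (a+b-1) := by
  have key := intervalIntegral.integral_comp_mul_right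
    (a := 0) (b := 1) (fun x => x ^ (a-1) * (t-x) ^ (b-1)) ht.ne'
  simp only [zero_mul, one_mul, smul_eq_mul] at key
  have h2 : (∫ u in (0:ℝ)..1, (fun x => x ^ (a-1) * (t-x) ^ (b-1)) (u * t))
      = t ^ (a-1) * t ^ (b-1) * (Real.Gamma a * Real.Gamma b / Real.Gamma (a+b)) := by
    rw [← realBeta01 ha hb, ← intervalIntegral.integral_const_mul]
    refine intervalIntegral.integral_congr fun u hu => ?_
    rw [Set.uIcc_of_le zero_le_one] at hu
    show (u*t) ^ (a-1) * (t - u*t) ^ (b-1) = _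
    rw [show t - u*t = (1-u)*t by ring, Real.mul_rpow hu.1 ht.le,
      Real.mul_rpow (by linarith [hu.2] : (0:ℝ) ≤ 1-u) ht.le]
    ring
  rw [h2] at key
  have hv : (∫ x in (0:ℝ)..t, x ^ (a-1) * (t-x) ^ (b-1))
      = t * (t ^ (a-1) * t ^ (b-1) * (Real.Gamma a * Real.Gamma b / Real.Gamma (a+b))) := by
    rw [key]; field_simp
  rw [hv, show t * (t ^ (a-1) * t ^ (b-1) * (Real.Gamma a * Real.Gamma b / Real.Gamma (a+b)))
      = Real.Gamma a * Real.Gamma b / Real.Gamma (a+b) * (t ^ (1:ℝ) * (t ^ (a-1) * t ^ (b-1)))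
      by rw [Real.rpow_one]; ring, ← Real.rpow_add ht, ← Real.rpow_add ht]
  ring_nf

lemma lintegral_beta {a b t : ℝ} (ha : 0 < a) (hb : 0 < b) (ht : 0 < t) :
    ∫⁻ x in Set.Ioo (0:ℝ) t, ENNReal.ofReal (x ^ (a-1) * (t-x) ^ (b-1))
      = ENNReal.ofReal (Real.Gamma a * Real.Gamma b / Real.Gamma (a+b) * t ^ (a+b-1)) := by
  rw [← betaScaled ha hb ht]
  have hInt : IntegrableOn (fun x => x ^ (a-1) * (t-x) ^ (b-1)) (Set.Ioo 0 t) := by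
    have := betaIntegrable ha hb ht
    rwa [intervalIntegrable_iff_integrableOn_Ioo_of_le ht.le] at this
  rw [intervalIntegral.integral_of_le ht.le, integral_Ioc_eq_integral_Ioo,
    ofReal_integral_eq_lintegral_ofReal hInt ?_]
  exact (ae_restrict_iff' measurableSet_Ioo).2 (Filter.Eventually.of_forall fun x hx =>
    mul_nonneg (rpow_nonneg hx.1.le _) (rpow_nonneg (by linarith [hx.2]) _))

lemma simplex_aux : ∀ m : ℕ, ∀ t : ℝ, 0 < t → ∀ α : Fin m → ℝ, (∀ i, α i < 1) →
    (∫⁻ s in orderedSimplex m t,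
        ENNReal.ofReal (∏ i, (s i - prevC s i) ^ (-(α i))))
      = ENNReal.ofReal
          ((∏ i, Real.Gamma (1 - α i)) / Real.Gamma (1 + m - ∑ i, α i)
            * t ^ ((m : ℝ) - ∑ i, α i)) := by
  intro m
  induction m with
  | zero =>
    intro t ht α hα
    have hS : orderedSimplex 0 t = Set.univ := by
      ext s; simp [orderedSimplex]
    rw [hS, Measure.restrict_univ]
    simp only [Finset.univ_eq_empty, Finset.prod_empty, Finset.sum_empty, Nat.cast_zero]
    rw [lintegral_const]
    have hvol : (volume : Measure (Fin 0 → ℝ)) Set.univ = 1 := by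
      rw [volume_pi, Measure.pi_univ]; simp
    rw [hvol, mul_one]
    norm_num [Real.Gamma_one]
  | succ m ih =>
    intro t ht α hα
    have hS : MeasurableSet (orderedSimplex (m+1) t) := measurableSet_orderedSimplex _ _
    set f : (Fin (m+1) → ℝ) → ℝ≥0∞ :=
      fun s => ENNReal.ofReal (∏ i, (s i - prevC s i) ^ (-(α i))) with hf
    have hfm : Measurable f := measurable_integrand α
    have hind : Measurable ((orderedSimplex (m+1) t).indicator f) := hfm.indicator hS
    have hmp := (measurePreserving_piFinSuccAbove (fun _ : Fin (m+1) => (volume : Measure ℝ)) 0).symm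
    -- nonnegativity facts
    have hsum : (∑ i, α (Fin.succ i)) ≤ m := by
      calc (∑ i : Fin m, α (Fin.succ i)) ≤ ∑ i : Fin m, (1:ℝ) :=
            Finset.sum_le_sum fun i _ => (hα (Fin.succ i)).le
        _ = m := by simp
    have hb : (0:ℝ) < 1 + m - ∑ i, α (Fin.succ i) := by linarith
    have ha : (0:ℝ) < 1 - α 0 := by linarith [hα 0]
    have hΓb : 0 < Real.Gamma (1 + m - ∑ i, α (Fin.succ i)) := Real.Gamma_pos_of_pos hb
    have hP : 0 < ∏ i, Real.Gamma (1 - α (Fin.succ i)) :=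
      Finset.prod_pos fun i _ => Real.Gamma_pos_of_pos (by linarith [hα (Fin.succ i)])
    have hC' : 0 ≤ (∏ i, Real.Gamma (1 - α (Fin.succ i))) / Real.Gamma (1 + m - ∑ i, α (Fin.succ i)) :=
      div_nonneg hP.le hΓb.le
    calc
      (∫⁻ s in orderedSimplex (m+1) t, f s)
          = ∫⁻ s, (orderedSimplex (m+1) t).indicator f s := (lintegral_indicator hS f).symm
      _ = ∫⁻ s, (orderedSimplex (m+1) t).indicator f s
            ∂(Measure.pi fun _ : Fin (m+1) => volume) := by rw [← volume_pi]
      _ = ∫⁻ p : ℝ × (Fin m → ℝ), (orderedSimplex (m+1) t).indicator f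
            ((MeasurableEquiv.piFinSuccAbove (fun _ : Fin (m+1) => ℝ) 0).symm p)
            ∂((volume : Measure ℝ).prod (Measure.pi fun _ : Fin m => volume)) :=
        (hmp.lintegral_comp hind).symm
      _ = ∫⁻ x : ℝ, ∫⁻ y : Fin m → ℝ, (orderedSimplex (m+1) t).indicator f
            ((MeasurableEquiv.piFinSuccAbove (fun _ : Fin (m+1) => ℝ) 0).symm (x, y))
            ∂(Measure.pi fun _ : Fin m => volume) ∂volume :=
        lintegral_prod _ ((hind.comp (MeasurableEquiv.measurable _)).aemeasurable)
      _ = ∫⁻ x : ℝ, ∫⁻ y : Fin m → ℝ, (orderedSimplex (m+1) t).indicator f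
            (Fin.cons x y) ∂(Measure.pi fun _ : Fin m => volume) ∂volume := by
        simp_rw [MeasurableEquiv.piFinSuccAbove_symm_apply, Fin.insertNthEquiv,
          Equiv.coe_fn_mk, Fin.insertNth_zero']
      _ = ∫⁻ x : ℝ, (Set.Icc (0:ℝ) t).indicator (fun x => ENNReal.ofReal (x ^ (-(α 0))) *
            ∫⁻ z in orderedSimplex m (t - x),
              ENNReal.ofReal (∏ i, (z i - prevC z i) ^ (-(α (Fin.succ i))))) x ∂volume := by
        refine lintegral_congr fun x => ?_
        by_cases hx : x ∈ Set.Icc (0:ℝ) t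
        · rw [Set.indicator_of_mem hx]
          have htr := lintegral_add_right_eq_self
            (μ := Measure.pi fun _ : Fin m => (volume : Measure ℝ))
            (fun y => (orderedSimplex (m+1) t).indicator f (Fin.cons x y)) (fun _ => x)
          rw [← htr]
          have hpt : ∀ z : Fin m → ℝ,
              (orderedSimplex (m+1) t).indicator f (Fin.cons x (z + (fun _ => x) : Fin m → ℝ))
                = (orderedSimplex m (t-x)).indicator
                    (fun z => ENNReal.ofReal
                      (x ^ (-(α 0)) * ∏ i, (z i - prevC z i) ^ (-(α (Fin.succ i))))) z := by
            intro z
            have hyz : (fun j => (z + (fun _ => x) : Fin m → ℝ) j - x) = z := by funext j; simp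
            have hmem : (Fin.cons x (z + (fun _ => x) : Fin m → ℝ) : Fin (m+1) → ℝ) ∈ orderedSimplex (m+1) t
                ↔ z ∈ orderedSimplex m (t - x) := by
              rw [cons_mem_simplex, hyz]
              exact and_iff_right ⟨hx.1, hx.2⟩
            by_cases hz : z ∈ orderedSimplex m (t - x)
            · rw [Set.indicator_of_mem (hmem.2 hz), Set.indicator_of_mem hz, hf]
              simp only
              rw [prod_cons, hyz]
              simp only [Pi.add_apply, add_sub_cancel_right]
            · rw [Set.indicator_of_notMem (fun h => hz (hmem.1 h)),
                Set.indicator_of_notMem hz]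
          rw [lintegral_congr fun z => hpt z,
            lintegral_indicator (measurableSet_orderedSimplex _ _), ← volume_pi]
          simp_rw [ENNReal.ofReal_mul (Real.rpow_nonneg hx.1 (-(α 0)))]
          rw [lintegral_const_mul' _ _ ENNReal.ofReal_ne_top]
        · rw [Set.indicator_of_notMem hx]
          have hzero : ∀ y : Fin m → ℝ,
              (orderedSimplex (m+1) t).indicator f (Fin.cons x y) = 0 := by
            intro y
            apply Set.indicator_of_notMem
            intro h
            rw [cons_mem_simplex] at h
            exact hx ⟨h.1.1, h.1.2⟩
          rw [lintegral_congr hzero, lintegral_zero]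
      _ = ∫⁻ x in Set.Ioo (0:ℝ) t, (ENNReal.ofReal (x ^ (-(α 0))) *
            ∫⁻ z in orderedSimplex m (t - x),
              ENNReal.ofReal (∏ i, (z i - prevC z i) ^ (-(α (Fin.succ i))))) ∂volume := by
        rw [lintegral_indicator measurableSet_Icc]
        exact (setLIntegral_congr Ioo_ae_eq_Icc).symm
      _ = ∫⁻ x in Set.Ioo (0:ℝ) t,
            (ENNReal.ofReal ((∏ i, Real.Gamma (1 - α (Fin.succ i)))
                / Real.Gamma (1 + m - ∑ i, α (Fin.succ i))) *
             ENNReal.ofReal (x ^ ((1 - α 0) - 1)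
                * (t - x) ^ ((1 + m - ∑ i, α (Fin.succ i)) - 1))) ∂volume := by
        refine setLIntegral_congr_fun measurableSet_Ioo
          (fun x hx => ?_)
        rw [ih (t - x) (by linarith [hx.2]) (fun i => α (Fin.succ i)) (fun i => hα (Fin.succ i))]
        rw [← ENNReal.ofReal_mul (Real.rpow_nonneg hx.1.le _)]
        rw [show x ^ (-(α 0)) * ((∏ i, Real.Gamma (1 - α (Fin.succ i)))
              / Real.Gamma (1 + m - ∑ i, α (Fin.succ i))
              * (t - x) ^ ((m:ℝ) - ∑ i, α (Fin.succ i)))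
            = (∏ i, Real.Gamma (1 - α (Fin.succ i)))
              / Real.Gamma (1 + m - ∑ i, α (Fin.succ i))
              * (x ^ ((1 - α 0) - 1) * (t - x) ^ ((1 + m - ∑ i, α (Fin.succ i)) - 1)) from by
          rw [show (1 - α 0) - 1 = -(α 0) from by ring,
            show (1 + (m:ℝ) - ∑ i, α (Fin.succ i)) - 1 = (m:ℝ) - ∑ i, α (Fin.succ i) from by ring]
          ring]
        rw [ENNReal.ofReal_mul hC']
      _ = ENNReal.ofReal ((∏ i, Real.Gamma (1 - α (Fin.succ i)))
            / Real.Gamma (1 + m - ∑ i, α (Fin.succ i))) *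
          ∫⁻ x in Set.Ioo (0:ℝ) t,
            ENNReal.ofReal (x ^ ((1 - α 0) - 1)
              * (t - x) ^ ((1 + m - ∑ i, α (Fin.succ i)) - 1)) ∂volume :=
        lintegral_const_mul' _ _ ENNReal.ofReal_ne_top
      _ = ENNReal.ofReal ((∏ i, Real.Gamma (1 - α (Fin.succ i)))
            / Real.Gamma (1 + m - ∑ i, α (Fin.succ i))) *
          ENNReal.ofReal (Real.Gamma (1 - α 0) * Real.Gamma (1 + m - ∑ i, α (Fin.succ i))
            / Real.Gamma ((1 - α 0) + (1 + m - ∑ i, α (Fin.succ i)))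
            * t ^ (((1 - α 0) + (1 + m - ∑ i, α (Fin.succ i))) - 1)) := by
        rw [lintegral_beta ha hb ht]
      _ = ENNReal.ofReal
          ((∏ i, Real.Gamma (1 - α i)) / Real.Gamma (1 + (m+1:ℕ) - ∑ i, α i)
            * t ^ (((m+1:ℕ) : ℝ) - ∑ i, α i)) := by
        rw [← ENNReal.ofReal_mul hC']
        congr 1
        rw [Fin.prod_univ_succ, Fin.sum_univ_succ]
        push_cast
        rw [show ((1 - α 0) + (1 + (m:ℝ) - ∑ i, α (Fin.succ i))) - 1
              = ((m:ℝ) + 1) - (α 0 + ∑ i, α (Fin.succ i)) from by ring,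
          show (1 - α 0) + (1 + (m:ℝ) - ∑ i, α (Fin.succ i))
              = 1 + ((m:ℝ) + 1) - (α 0 + ∑ i, α (Fin.succ i)) from by ring]
        have hΓc : 0 < Real.Gamma (1 + ((m:ℝ) + 1) - (α 0 + ∑ i, α (Fin.succ i))) :=
          Real.Gamma_pos_of_pos (by linarith [hα 0])
        field_simp [hΓb.ne', hΓc.ne']

/-- **Dirichlet-type simplex integral:** for `m ≥ 1`, `t > 0` and real exponents
`α i < 1`, the integral over `{0 ≤ t_1 ≤ ⋯ ≤ t_m ≤ t}` of `∏ (t_i − t_{i−1})^{−α_i}`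
equals `(∏ Γ(1−α_i) / Γ(1 + m − Σα_i)) · t^{m−Σα_i}`; in particular it is finite. -/
theorem simplex_integral_eq (m : ℕ) (hm : 1 ≤ m) (t : ℝ) (ht : 0 < t)
    (α : Fin m → ℝ) (hα : ∀ i, α i < 1) :
    (∫⁻ s in orderedSimplex m t,
        ENNReal.ofReal (∏ i, (s i - prevC s i) ^ (-(α i))))
      = ENNReal.ofReal
          ((∏ i, Real.Gamma (1 - α i)) / Real.Gamma (1 + m - ∑ i, α i)
            * t ^ ((m : ℝ) - ∑ i, α i)) :=
  simplex_aux m t ht α hα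
end
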